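/- Let σ > 0, let Σ₀ be a d×d real symmetric positive definite matrix, and let A₁,…,Aₙ ∈ ℝ^d satisfy ‖A_t‖₂ ≤ κ for all t. Then log( det(Σ₀⁻¹ + σ⁻² Σ_{t=1}^n A_t A_tᵀ) / det(Σ₀⁻¹) ) ≤ d · log(1 + n κ² λ_max(Σ₀) / (σ² d)), where λ_max(Σ₀) denotes the largest eigenvalue of Σ₀. -/

import Mathlib

open Finset Matrix

lemma aux_psd_vecMulVec {d : ℕ} (a : Fin d → ℝ) : (vecMulVec a a).PosSemidef := by
  refine posSemidef_iff_dotProduct_mulVec.mpr ⟨?_, ?_⟩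
  · ext i j
    simp [conjTranspose_apply, vecMulVec_apply, mul_comm]
  · intro x
    have h : star x ⬝ᵥ (vecMulVec a a *ᵥ x) = (a ⬝ᵥ x) * (a ⬝ᵥ x) := by
      simp only [star_trivial, dotProduct, mulVec, vecMulVec_apply]
      rw [Finset.sum_mul_sum]
      simp only [Finset.mul_sum]
      refine Finset.sum_congr rfl fun i _ => Finset.sum_congr rfl fun j _ => by ring
    rw [h]
    exact mul_self_nonneg _

-- Rayleigh bound
lemma aux_rayleigh {d : ℕ} (hd : 0 < d) (S0 : Matrix (Fin d) (Fin d) ℝ) (hS0 : S0.PosDef)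
    (a : Fin d → ℝ) :
    a ⬝ᵥ (S0 *ᵥ a) ≤ (⨆ i, hS0.1.eigenvalues i) * (a ⬝ᵥ a) := by
  classical
  haveI : Nonempty (Fin d) := Fin.pos_iff_nonempty.mp hd
  set V : Matrix (Fin d) (Fin d) ℝ := (hS0.1.eigenvectorUnitary : Matrix (Fin d) (Fin d) ℝ) with hV
  set lam := hS0.1.eigenvalues
  have hspec : S0 = V * diagonal lam * star V := by
    have := hS0.1.spectral_theorem
    simpa [RCLike.ofReal_real_eq_id] using this
  have hUV : star V * V = 1 := Matrix.mem_unitaryGroup_iff'.mp (hS0.1.eigenvectorUnitary).2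
  set y := star V *ᵥ a with hy
  have hquad : a ⬝ᵥ (S0 *ᵥ a) = ∑ i, lam i * (y i)^2 := by
    rw [hspec]
    rw [← mulVec_mulVec, ← mulVec_mulVec, dotProduct_mulVec a V]
    have hvm : a ᵥ* V = y := by
      rw [hy]
      ext i
      simp [vecMul, mulVec, dotProduct, conjTranspose_apply, mul_comm]
    rw [hvm, ← hy]
    simp [dotProduct, mulVec_diagonal]
    exact Finset.sum_congr rfl fun i _ => by ring
  have hyy : y ⬝ᵥ y = a ⬝ᵥ a := by
    rw [hy]
    rw [dotProduct_mulVec, ← mulVec_transpose]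
    have : (star V)ᵀ *ᵥ (star V *ᵥ a) = a := by
      rw [mulVec_mulVec]
      have : (star V)ᵀ * star V = 1 := by
        have h1 : (star V)ᵀ = V := by
          ext i j; simp [conjTranspose_apply]
        rw [h1]
        exact Matrix.mem_unitaryGroup_iff.mp (hS0.1.eigenvectorUnitary).2
      rw [this, one_mulVec]
    rw [this]
  have hL : ∀ i, lam i ≤ ⨆ j, lam j := fun i =>
    le_ciSup (Set.Finite.bddAbove (Set.finite_range _)) i
  calc a ⬝ᵥ (S0 *ᵥ a) = ∑ i, lam i * (y i)^2 := hquad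
    _ ≤ ∑ i, (⨆ j, lam j) * (y i)^2 := by
        exact Finset.sum_le_sum fun i _ => mul_le_mul_of_nonneg_right (hL i) (sq_nonneg _)
    _ = (⨆ j, lam j) * (y ⬝ᵥ y) := by
        rw [← Finset.mul_sum]; congr 1; simp [dotProduct, sq]
    _ = _ := by rw [hyy]

theorem log_det_ratio_le {d n : ℕ} (hd : 0 < d) (σ κ : ℝ) (hσ : 0 < σ)
    (S0 : Matrix (Fin d) (Fin d) ℝ) (hS0 : S0.PosDef)
    (A : ℕ → Fin d → ℝ)
    (hA : ∀ t ∈ Finset.Icc 1 n, Real.sqrt (A t ⬝ᵥ A t) ≤ κ) :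
    Real.log
        ((S0⁻¹ + (σ ^ 2)⁻¹ • ∑ t ∈ Finset.Icc 1 n, Matrix.vecMulVec (A t) (A t)).det /
          (S0⁻¹).det) ≤
      d * Real.log (1 + n * κ ^ 2 * (⨆ i, hS0.1.eigenvalues i) / (σ ^ 2 * d)) := by
  classical
  haveI : Nonempty (Fin d) := Fin.pos_iff_nonempty.mp hd
  set L := ⨆ i, hS0.1.eigenvalues i with hLdef
  have hLpos : 0 < L :=
    lt_of_lt_of_le (hS0.eigenvalues_pos (Classical.arbitrary _))
      (le_ciSup (Set.Finite.bddAbove (Set.finite_range _)) _)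
  have hσ2 : (0:ℝ) < σ ^ 2 := by positivity
  set M : Matrix (Fin d) (Fin d) ℝ :=
    (σ ^ 2)⁻¹ • ∑ t ∈ Finset.Icc 1 n, vecMulVec (A t) (A t) with hMdef
  -- M is PSD
  have hMpsd : M.PosSemidef := by
    refine posSemidef_iff_dotProduct_mulVec.mpr ⟨?_, ?_⟩
    · show Mᴴ = M
      rw [hMdef, conjTranspose_smul, conjTranspose_sum,
        Finset.sum_congr rfl (fun t _ => (aux_psd_vecMulVec (A t)).1.eq)]
      simp
    · intro x
      rw [hMdef, smul_mulVec, dotProduct_smul, smul_eq_mul]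
      refine mul_nonneg (by positivity) ?_
      have hsplit : (∑ t ∈ Finset.Icc 1 n, vecMulVec (A t) (A t)) *ᵥ x
          = ∑ t ∈ Finset.Icc 1 n, vecMulVec (A t) (A t) *ᵥ x := by
        ext i
        simp only [mulVec, dotProduct, Finset.sum_apply, Matrix.sum_apply, Finset.sum_mul]
        rw [Finset.sum_comm]
      rw [hsplit]
      have hdot : star x ⬝ᵥ ∑ t ∈ Finset.Icc 1 n, vecMulVec (A t) (A t) *ᵥ x
          = ∑ t ∈ Finset.Icc 1 n, star x ⬝ᵥ (vecMulVec (A t) (A t) *ᵥ x) := by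
        simp only [dotProduct, Finset.sum_apply, Finset.mul_sum]
        rw [Finset.sum_comm]
      rw [hdot]
      exact Finset.sum_nonneg fun t _ => (aux_psd_vecMulVec (A t)).dotProduct_mulVec_nonneg x
  -- square root of S0
  set R := (open scoped MatrixOrder in CFC.sqrt S0) with hRdef
  have hRpsd : R.PosSemidef := by
    open scoped MatrixOrder in exact (CFC.sqrt_nonneg S0).posSemidef
  have hRR : R * R = S0 := by
    open scoped MatrixOrder in exact CFC.sqrt_mul_sqrt_self S0 hS0.posSemidef.nonneg
  have hdetR : IsUnit R.det := by
    rw [isUnit_iff_ne_zero]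
    intro h
    have : S0.det = 0 := by rw [← hRR, det_mul, h, mul_zero]
    exact hS0.det_pos.ne' this
  set B := R * M * R with hBdef
  have hBpsd : B.PosSemidef := by
    have := hMpsd.mul_mul_conjTranspose_same R
    rwa [hRpsd.1.eq] at this
  -- determinant ratio
  have hinv : S0⁻¹ = R⁻¹ * R⁻¹ := by rw [← hRR, Matrix.mul_inv_rev]
  have key : S0⁻¹ + M = R⁻¹ * (1 + B) * R⁻¹ := by
    have h1 : R⁻¹ * (1 + B) * R⁻¹ = R⁻¹ * R⁻¹ + R⁻¹ * B * R⁻¹ := by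
      noncomm_ring
    have h2 : R⁻¹ * B * R⁻¹ = M := by
      rw [hBdef, show R⁻¹ * (R * M * R) * R⁻¹ = (R⁻¹ * R) * M * (R * R⁻¹) by noncomm_ring,
        Matrix.nonsing_inv_mul _ hdetR, Matrix.mul_nonsing_inv _ hdetR, one_mul, mul_one]
    rw [h1, h2, hinv]
  have hratio : (S0⁻¹ + M).det / (S0⁻¹).det = (1 + B).det := by
    have hdd : (S0⁻¹ + M).det = (S0⁻¹).det * (1 + B).det := by
      rw [key, det_mul, det_mul, hinv, det_mul]; ring
    rw [hdd, mul_div_cancel_left₀ _ (ne_of_gt hS0.inv.det_pos)]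
  -- eigenvalues of B
  set U : Matrix (Fin d) (Fin d) ℝ := (hBpsd.1.eigenvectorUnitary : Matrix (Fin d) (Fin d) ℝ)
    with hUdef
  set μ := hBpsd.1.eigenvalues with hμdef
  have hμ0 : ∀ i, 0 ≤ μ i := hBpsd.eigenvalues_nonneg
  have hUU : U * star U = 1 := Matrix.mem_unitaryGroup_iff.mp (hBpsd.1.eigenvectorUnitary).2
  have hUU' : star U * U = 1 := Matrix.mem_unitaryGroup_iff'.mp (hBpsd.1.eigenvectorUnitary).2
  have hspecB : B = U * diagonal μ * star U := by
    have := hBpsd.1.spectral_theorem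
    simpa [RCLike.ofReal_real_eq_id] using this
  have hdet1B : (1 + B).det = ∏ i, (1 + μ i) := by
    have h1B : 1 + B = U * diagonal (fun i => 1 + μ i) * star U := by
      have hdiag : diagonal (fun i : Fin d => 1 + μ i) = 1 + diagonal μ := by
        rw [← diagonal_one, diagonal_add]
      rw [hdiag, Matrix.mul_add, Matrix.add_mul, mul_one, hUU, ← hspecB]
    rw [h1B, det_mul_right_comm, hUU, one_mul, det_diagonal]
  have htraceB : B.trace = ∑ i, μ i := by
    conv_lhs => rw [hspecB]
    rw [trace_mul_comm, ← mul_assoc, hUU', one_mul, trace_diagonal]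
  -- trace bound
  have htrB_eq : B.trace = (σ ^ 2)⁻¹ * ∑ t ∈ Finset.Icc 1 n, (A t ⬝ᵥ (S0 *ᵥ A t)) := by
    rw [hBdef, Matrix.trace_mul_comm (R * M) R, ← mul_assoc, hRR, hMdef, mul_smul_comm,
      trace_smul, smul_eq_mul, Matrix.mul_sum, trace_sum]
    congr 1
    refine Finset.sum_congr rfl fun t _ => ?_
    simp only [trace, diag_apply, mul_apply, vecMulVec_apply, dotProduct, mulVec,
      Finset.mul_sum]
    exact Finset.sum_congr rfl fun i _ => Finset.sum_congr rfl fun j _ => by ring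
  have hquad_le : ∀ t ∈ Finset.Icc 1 n, A t ⬝ᵥ (S0 *ᵥ A t) ≤ L * κ ^ 2 := by
    intro t ht
    have h1 := aux_rayleigh hd S0 hS0 (A t)
    have h2 : A t ⬝ᵥ A t ≤ κ ^ 2 := by
      have h0 : (0:ℝ) ≤ A t ⬝ᵥ A t := Finset.sum_nonneg fun i _ => mul_self_nonneg _
      have := hA t ht
      nlinarith [Real.sq_sqrt h0, Real.sqrt_nonneg (A t ⬝ᵥ A t)]
    calc A t ⬝ᵥ (S0 *ᵥ A t) ≤ L * (A t ⬝ᵥ A t) := h1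
      _ ≤ L * κ ^ 2 := mul_le_mul_of_nonneg_left h2 hLpos.le
  have htrB_le : B.trace ≤ n * κ ^ 2 * L / σ ^ 2 := by
    rw [htrB_eq]
    have hsum : ∑ t ∈ Finset.Icc 1 n, (A t ⬝ᵥ (S0 *ᵥ A t)) ≤ n * (L * κ ^ 2) := by
      calc ∑ t ∈ Finset.Icc 1 n, (A t ⬝ᵥ (S0 *ᵥ A t))
          ≤ ∑ t ∈ Finset.Icc 1 n, L * κ ^ 2 := Finset.sum_le_sum hquad_le
        _ = n * (L * κ ^ 2) := by rw [Finset.sum_const, Nat.card_Icc]; simp [nsmul_eq_mul]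
    calc (σ ^ 2)⁻¹ * ∑ t ∈ Finset.Icc 1 n, (A t ⬝ᵥ (S0 *ᵥ A t))
        ≤ (σ ^ 2)⁻¹ * (n * (L * κ ^ 2)) := by
          exact mul_le_mul_of_nonneg_left hsum (by positivity)
      _ = n * κ ^ 2 * L / σ ^ 2 := by ring
  -- Jensen
  set s := ∑ i, μ i with hsdef
  have hs0 : 0 ≤ s := Finset.sum_nonneg fun i _ => hμ0 i
  have hdpos : (0:ℝ) < d := by exact_mod_cast hd
  have hw1 : ∑ _i : Fin d, (d:ℝ)⁻¹ = 1 := by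
    rw [Finset.sum_const, Finset.card_univ, Fintype.card_fin, nsmul_eq_mul]
    field_simp
  have jensen : ∑ i, (d:ℝ)⁻¹ • Real.log (1 + μ i) ≤
      Real.log (∑ i, (d:ℝ)⁻¹ • (1 + μ i)) := by
    refine (strictConcaveOn_log_Ioi.concaveOn).le_map_sum
      (fun i _ => by positivity) hw1 (fun i _ => ?_)
    exact Set.mem_Ioi.mpr (by nlinarith [hμ0 i])
  have hsum_eq : ∑ i, (d:ℝ)⁻¹ • (1 + μ i) = 1 + s / d := by
    simp only [smul_eq_mul]
    rw [← Finset.mul_sum, Finset.sum_add_distrib, Finset.sum_const, Finset.card_univ,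
      Fintype.card_fin, nsmul_eq_mul, mul_one]
    field_simp
    rfl
  have hlog1B : Real.log ((1 + B).det) ≤ d * Real.log (1 + s / d) := by
    rw [hdet1B, Real.log_prod (fun i _ => by nlinarith [hμ0 i])]
    calc ∑ i, Real.log (1 + μ i) = d * ∑ i, (d:ℝ)⁻¹ • Real.log (1 + μ i) := by
          simp only [smul_eq_mul]
          rw [← Finset.mul_sum, ← mul_assoc, mul_inv_cancel₀ hdpos.ne', one_mul]
      _ ≤ d * Real.log (∑ i, (d:ℝ)⁻¹ • (1 + μ i)) :=
          mul_le_mul_of_nonneg_left jensen hdpos.le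
      _ = d * Real.log (1 + s / d) := by rw [hsum_eq]
  -- assemble
  have hs_le : s ≤ n * κ ^ 2 * L / σ ^ 2 := htraceB ▸ htrB_le
  have hfinal : Real.log (1 + s / d) ≤ Real.log (1 + n * κ ^ 2 * L / (σ ^ 2 * d)) := by
    apply Real.log_le_log (by positivity)
    rw [show n * κ ^ 2 * L / (σ ^ 2 * d) = (n * κ ^ 2 * L / σ ^ 2) / d by ring]
    gcongr
  calc Real.log ((S0⁻¹ + M).det / (S0⁻¹).det) = Real.log ((1 + B).det) := by rw [hratio]
    _ ≤ d * Real.log (1 + s / d) := hlog1B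
    _ ≤ d * Real.log (1 + n * κ ^ 2 * L / (σ ^ 2 * d)) :=
        mul_le_mul_of_nonneg_left hfinal hdpos.le
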